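/- If N is a sound deterministic negotiation and A is the minimal DFA of Paths(N), then the negotiation N_A is sound: every execution of N_A from its initial configuration extends to an execution reaching its final configuration. -/

import Mathlib

universe u v w

variable {P : Type u} {A : Type v}

/-- One swap of two adjacent independent letters. -/
def SwapStep (dom : A → Set P) (u v : List A) : Prop :=
  ∃ x y : List A, ∃ a b : A, dom a ∩ dom b = ∅ ∧
    u = x ++ a :: b :: y ∧ v = x ++ b :: a :: y

/-- Mazurkiewicz trace equivalence: reflexive-transitive-symmetric closure of swaps. -/
def TraceEq (dom : A → Set P) : List A → List A → Prop :=
  Relation.EqvGen (SwapStep dom)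

open Classical in
/-- Projection of a word on a process `p`: keep letters whose domain contains `p`. -/
noncomputable def proj (dom : A → Set P) (p : P) : List A → List A
  | [] => []
  | a :: w => if p ∈ dom a then a :: proj dom p w else proj dom p w

/-- A word `t` is co-prime with minimal letter `b` if every trace-equivalent word starts with `b`. -/
def CoPrime (dom : A → Set P) (t : List A) (b : A) : Prop :=
  ∀ v, TraceEq dom t v → ∃ v', v = b :: v'

/-- A `(b,p)`-step: `s = b·s'` is co-prime with minimal letter `b`, `p ∈ dom b`,
and `b` is the only letter of `s` involving `p`. -/
def IsStep (dom : A → Set P) (s : List A) (b : A) (p : P) : Prop :=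
  p ∈ dom b ∧ CoPrime dom s b ∧ ∃ s', s = b :: s' ∧ ∀ a ∈ s', p ∉ dom a

/-- A (deterministic) negotiation diagram. -/
structure Negotiation (P : Type u) (A : Type v) where
  Node : Type w
  dnode : Node → Set P
  ninit : Node
  nfin : Node
  tr : Node → A → P → Option Node

namespace Negotiation

/-- Well-formedness conditions of a negotiation diagram over distributed alphabet `dom`. -/
def WellFormed (N : Negotiation P A) (dom : A → Set P) : Prop :=
  (∀ n, (N.dnode n).Nonempty) ∧
  N.dnode N.ninit = Set.univ ∧
  N.dnode N.nfin = Set.univ ∧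
  (∀ n a p n', N.tr n a p = some n' →
    N.dnode n = dom a ∧ p ∈ dom a ∧ p ∈ N.dnode n' ∧
    ∀ q ∈ dom a, (N.tr n a q).isSome)

/-- Node `n` is enabled in configuration `C`. -/
def Enabled (N : Negotiation P A) (n : N.Node) (C : P → N.Node) : Prop :=
  ∀ p ∈ N.dnode n, C p = n

/-- `n` is the unique node enabled in `C`. -/
def UniqueEnabled (N : Negotiation P A) (n : N.Node) (C : P → N.Node) : Prop :=
  N.Enabled n C ∧ ∀ m, N.Enabled m C → m = n

/-- A step of a negotiation on action `a` between configurations. -/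
def Step (N : Negotiation P A) (dom : A → Set P) (C : P → N.Node) (a : A)
    (C' : P → N.Node) : Prop :=
  ∃ n, N.Enabled n C ∧ (∀ p ∈ dom a, N.tr n a p = some (C' p)) ∧
    ∀ p, p ∉ dom a → C' p = C p

/-- Execution of a word between configurations. -/
def Run (N : Negotiation P A) (dom : A → Set P) :
    (P → N.Node) → List A → (P → N.Node) → Prop
  | C, [], C' => C = C'
  | C, a :: word, C'' => ∃ C', N.Step dom C a C' ∧ N.Run dom C' word C''

/-- The initial configuration: all processes in the initial node. -/
def Cinit (N : Negotiation P A) : P → N.Node := fun _ => N.ninit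

/-- The final configuration: all processes in the final node. -/
def Cfin (N : Negotiation P A) : P → N.Node := fun _ => N.nfin

/-- The language of successful executions of `N`. -/
def Lang (N : Negotiation P A) (dom : A → Set P) (word : List A) : Prop :=
  N.Run dom N.Cinit word N.Cfin

/-- Soundness: every execution from the initial configuration extends to a successful one. -/
def Sound (N : Negotiation P A) (dom : A → Set P) : Prop :=
  ∀ word C, N.Run dom N.Cinit word C → ∃ v, N.Run dom C v N.Cfin

/-- A local path of process `p` in the graph of `N`. -/
def PPath (N : Negotiation P A) (p : P) : N.Node → List A → N.Node → Prop
  | n, [], n' => n = n'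
  | n, a :: word, n'' => ∃ n', N.tr n a p = some n' ∧ N.PPath p n' word n''

/-- A local path in the graph of `N`, labelled over the alphabet `A_dom` of pairs `(a,p)`. -/
def GPath (N : Negotiation P A) : N.Node → List (A × P) → N.Node → Prop
  | n, [], n' => n = n'
  | n, x :: word, n'' => ∃ n', N.tr n x.1 x.2 = some n' ∧ N.GPath n' word n''

/-- `Paths(N)`: labels of local paths from the initial to the final node. -/
def PathsL (N : Negotiation P A) : Set (List (A × P)) :=
  { w | N.GPath N.ninit w N.nfin }

end Negotiation

/-- A DFA with a partial transition function and a single final state. -/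
structure PDFA (B : Type v) where
  S : Type w
  init : S
  trd : S → B → Option S
  fin : S

/-- Run of a partial DFA on a word. -/
def DRun (D : PDFA B) : D.S → List B → D.S → Prop
  | s, [], s' => s = s'
  | s, x :: word, s'' => ∃ s', D.trd s x = some s' ∧ DRun D s' word s''

/-- Acceptance from a state. -/
def AccFrom (D : PDFA B) (s : D.S) (word : List B) : Prop := DRun D s word D.fin

/-- Acceptance of the DFA. -/
def Accepts (D : PDFA B) (word : List B) : Prop := AccFrom D D.init word

/-- Trimmed: every state reachable and co-reachable. -/
def Trimmed (D : PDFA B) : Prop :=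
  ∀ s, (∃ word, DRun D D.init word s) ∧ (∃ word, DRun D s word D.fin)

/-- `D` is (a copy of) the minimal DFA of `L`: it accepts `L`, is trimmed,
and states with equal residual languages are equal (Myhill–Nerode). -/
def MinimalDFAFor (D : PDFA B) (L : Set (List B)) : Prop :=
  (∀ word, Accepts D word ↔ word ∈ L) ∧ Trimmed D ∧
  ∀ s s', (∀ word, AccFrom D s word ↔ AccFrom D s' word) → s = s'

open Classical in
/-- The negotiation `N_A` associated with a dom-complete DFA over the alphabet `A × P`:
states become nodes, `dnode s = dom a` when some `(a,p)` is outgoing from `s`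
(and `Proc` otherwise, in particular at the final state), and transitions are inherited. -/
noncomputable def negOfDFA (dom : A → Set P) (D : PDFA (A × P)) : Negotiation P A where
  Node := D.S
  dnode := fun s =>
    if h : ∃ x : A × P, (D.trd s x).isSome then dom h.choose.1 else Set.univ
  ninit := D.init
  nfin := D.fin
  tr := fun s a p => D.trd s (a, p)


section NASoundAux

open Negotiation

variable {P : Type u} {A : Type v}

theorem gpath_det {N : Negotiation P A} {w : List (A × P)} :
    ∀ {n m m' : N.Node}, N.GPath n w m → N.GPath n w m' → m = m' := by
  induction w with
  | nil => intro n m m' h h'; exact h.symm.trans h'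
  | cons x w ih =>
    intro n m m' h h'
    obtain ⟨k, hk, hkw⟩ := h
    obtain ⟨k', hk', hkw'⟩ := h'
    rw [hk] at hk'
    cases hk'
    exact ih hkw hkw'

theorem gpath_append {N : Negotiation P A} {w u : List (A × P)} :
    ∀ {n m : N.Node}, N.GPath n (w ++ u) m ↔ ∃ k, N.GPath n w k ∧ N.GPath k u m := by
  induction w with
  | nil =>
    intro n m
    constructor
    · intro h; exact ⟨n, rfl, h⟩
    · rintro ⟨k, hk, h⟩; cases hk; exact h
  | cons x w ih =>
    intro n m
    constructor
    · rintro ⟨k, hk, hw⟩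
      obtain ⟨j, hj1, hj2⟩ := ih.mp hw
      exact ⟨j, ⟨k, hk, hj1⟩, hj2⟩
    · rintro ⟨j, ⟨k, hk, hw⟩, hu⟩
      exact ⟨k, hk, ih.mpr ⟨j, hw, hu⟩⟩

theorem drun_det {B : Type*} {D : PDFA B} {w : List B} :
    ∀ {s t t' : D.S}, DRun D s w t → DRun D s w t' → t = t' := by
  induction w with
  | nil => intro s t t' h h'; exact h.symm.trans h'
  | cons x w ih =>
    intro s t t' h h'
    obtain ⟨k, hk, hkw⟩ := h
    obtain ⟨k', hk', hkw'⟩ := h'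
    rw [hk] at hk'
    cases hk'
    exact ih hkw hkw'

theorem drun_append {B : Type*} {D : PDFA B} {w u : List B} :
    ∀ {s t : D.S}, DRun D s (w ++ u) t ↔ ∃ k, DRun D s w k ∧ DRun D k u t := by
  induction w with
  | nil =>
    intro s t
    constructor
    · intro h; exact ⟨s, rfl, h⟩
    · rintro ⟨k, hk, h⟩; cases hk; exact h
  | cons x w ih =>
    intro s t
    constructor
    · rintro ⟨k, hk, hw⟩
      obtain ⟨j, hj1, hj2⟩ := ih.mp hw
      exact ⟨j, ⟨k, hk, hj1⟩, hj2⟩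
    · rintro ⟨j, ⟨k, hk, hw⟩, hu⟩
      exact ⟨k, hk, ih.mpr ⟨j, hw, hu⟩⟩

theorem run_append {N : Negotiation P A} {dom : A → Set P} {u v : List A} :
    ∀ {C C' C'' : P → N.Node}, N.Run dom C u C' → N.Run dom C' v C'' →
      N.Run dom C (u ++ v) C'' := by
  induction u with
  | nil => intro C C' C'' h h'; cases h; exact h'
  | cons a u ih =>
    intro C C' C'' h h'
    obtain ⟨C₁, hst, hr⟩ := h
    exact ⟨C₁, hst, ih hr h'⟩

/-- Residual-language relation between nodes of `N` and states of `D`. -/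
def NRel (N : Negotiation P A) (D : PDFA (A × P)) (n : N.Node) (s : D.S) : Prop :=
  ∀ u, AccFrom D s u ↔ N.GPath n u N.nfin

section WithMin

variable {N : Negotiation P A} {D : PDFA (A × P)}

theorem nrel_of (hmin : MinimalDFAFor D N.PathsL) {w : List (A × P)} {s : D.S} {n : N.Node}
    (h1 : DRun D D.init w s) (h2 : N.GPath N.ninit w n) : NRel N D n s := by
  intro u
  constructor
  · intro hu
    have hacc : Accepts D (w ++ u) := drun_append.mpr ⟨s, h1, hu⟩
    have hL : N.GPath N.ninit (w ++ u) N.nfin := (hmin.1 _).mp hacc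
    obtain ⟨k, hk1, hk2⟩ := gpath_append.mp hL
    rwa [gpath_det hk1 h2] at hk2
  · intro hu
    have hL : N.GPath N.ninit (w ++ u) N.nfin := gpath_append.mpr ⟨n, h2, hu⟩
    have hacc : Accepts D (w ++ u) := (hmin.1 _).mpr hL
    obtain ⟨k, hk1, hk2⟩ := drun_append.mp hacc
    rwa [drun_det hk1 h1] at hk2

theorem nrel_exists (hmin : MinimalDFAFor D N.PathsL) (s : D.S) : ∃ n, NRel N D n s := by
  obtain ⟨⟨w, hw⟩, ⟨u, hu⟩⟩ := hmin.2.1 s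
  have hacc : Accepts D (w ++ u) := drun_append.mpr ⟨s, hw, hu⟩
  have hL : N.GPath N.ninit (w ++ u) N.nfin := (hmin.1 _).mp hacc
  obtain ⟨k, hk1, _⟩ := gpath_append.mp hL
  exact ⟨k, nrel_of hmin hw hk1⟩

theorem nrel_unique (hmin : MinimalDFAFor D N.PathsL) {n : N.Node} {s s' : D.S}
    (h : NRel N D n s) (h' : NRel N D n s') : s = s' :=
  hmin.2.2 s s' fun u => (h u).trans (h' u).symm

theorem nrel_init (hmin : MinimalDFAFor D N.PathsL) : NRel N D N.ninit D.init :=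
  fun u => hmin.1 u

theorem nrel_forward (hmin : MinimalDFAFor D N.PathsL) {n : N.Node} {s s' : D.S} {x : A × P}
    (h : NRel N D n s) (hx : D.trd s x = some s') :
    ∃ n', N.tr n x.1 x.2 = some n' ∧ NRel N D n' s' := by
  obtain ⟨_, u, hu⟩ := hmin.2.1 s'
  have hacc : AccFrom D s (x :: u) := ⟨s', hx, hu⟩
  obtain ⟨n', hn', _⟩ := (h _).mp hacc
  refine ⟨n', hn', fun u' => ?_⟩
  constructor
  · intro h1
    have : AccFrom D s (x :: u') := ⟨s', hx, h1⟩
    obtain ⟨m, hm, hm2⟩ := (h _).mp this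
    rw [hn'] at hm; cases hm; exact hm2
  · intro h1
    have : N.GPath n (x :: u') N.nfin := ⟨n', hn', h1⟩
    obtain ⟨t, ht, ht2⟩ := (h _).mpr this
    rw [hx] at ht; cases ht; exact ht2

theorem nrel_backward (hmin : MinimalDFAFor D N.PathsL) {n n' : N.Node} {s : D.S} {x : A × P}
    {u : List (A × P)}
    (h : NRel N D n s) (hx : N.tr n x.1 x.2 = some n') (hu : N.GPath n' u N.nfin) :
    ∃ s', D.trd s x = some s' ∧ NRel N D n' s' := by
  have hp : N.GPath n (x :: u) N.nfin := ⟨n', hx, hu⟩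
  obtain ⟨s', hs', _⟩ := (h _).mpr hp
  refine ⟨s', hs', ?_⟩
  obtain ⟨n'', hn'', hrel⟩ := nrel_forward hmin h hs'
  rw [hx] at hn''; cases hn''; exact hrel

theorem nrel_nfin (hmin : MinimalDFAFor D N.PathsL) (hfin : ∀ a p, N.tr N.nfin a p = none)
    {s : D.S} (h : NRel N D N.nfin s) : s = D.fin := by
  have hgp : ∀ u, N.GPath N.nfin u N.nfin ↔ u = [] := by
    intro u
    constructor
    · intro hu
      cases u with
      | nil => rfl
      | cons x u =>
        obtain ⟨k, hk, _⟩ := hu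
        rw [hfin x.1 x.2] at hk
        cases hk
    · rintro rfl; rfl
  refine hmin.2.2 s D.fin fun u => ?_
  rw [h u, hgp u]
  constructor
  · rintro rfl; rfl
  · intro hu
    cases u with
    | nil => rfl
    | cons x u =>
      exfalso
      obtain ⟨s₁, hs₁, hu'⟩ := hu
      obtain ⟨⟨w', hw'⟩, _⟩ := hmin.2.1 D.fin
      have h1 : N.GPath N.ninit w' N.nfin := (hmin.1 w').mp hw'
      have h2 : Accepts D (w' ++ x :: u) := drun_append.mpr ⟨D.fin, hw', s₁, hs₁, hu'⟩
      have h3 := (hmin.1 _).mp h2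
      obtain ⟨k, hk1, hk2⟩ := gpath_append.mp h3
      rw [gpath_det hk1 h1] at hk2
      obtain ⟨j, hj, _⟩ := hk2
      rw [hfin x.1 x.2] at hj
      cases hj

variable {dom : A → Set P}

theorem dnodeA_eq (hmin : MinimalDFAFor D N.PathsL) (hWF : N.WellFormed dom)
    {s s' : D.S} {a : A} {p : P} (h : D.trd s (a, p) = some s') :
    (negOfDFA dom D).dnode s = dom a := by
  have hex : ∃ x : A × P, (D.trd s x).isSome := ⟨(a, p), by rw [h]; rfl⟩
  have hd : (negOfDFA dom D).dnode s = dom hex.choose.1 := by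
    simp only [negOfDFA]
    rw [dif_pos hex]
  rw [hd]
  obtain ⟨n, hn⟩ := nrel_exists hmin s
  obtain ⟨s₁, hs₁⟩ := Option.isSome_iff_exists.mp hex.choose_spec
  obtain ⟨n₁, hn₁, _⟩ := nrel_forward hmin hn hs₁
  obtain ⟨n₂, hn₂, _⟩ := nrel_forward hmin hn h
  have e1 := (hWF.2.2.2 _ _ _ _ hn₁).1
  have e2 := (hWF.2.2.2 _ _ _ _ hn₂).1
  rw [← e1, e2]

/-- Lemma A: two processes mutually in each other's current domain, in a
configuration from which the final configuration is reachable, are at the same node. -/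
theorem nodes_eq (hWF : N.WellFormed dom) :
    ∀ {v : List A} {C : P → N.Node} {p q : P},
      N.Run dom C v N.Cfin → q ∈ N.dnode (C p) → p ∈ N.dnode (C q) →
      C p ≠ N.nfin → C p = C q := by
  intro v
  induction v with
  | nil =>
    intro C p q hr _ _ hp
    cases hr
    exact absurd rfl hp
  | cons a v ih =>
    intro C p q hr hq hp hnf
    obtain ⟨C', ⟨n, hen, htr, hkeep⟩, hrun⟩ := hr
    by_cases hpa : p ∈ dom a
    · have hdn : N.dnode n = dom a := (hWF.2.2.2 _ _ _ _ (htr p hpa)).1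
      have hcp : C p = n := hen p (hdn ▸ hpa)
      by_cases hqa : q ∈ dom a
      · rw [hcp, hen q (hdn ▸ hqa)]
      · exact absurd (hcp ▸ hq : q ∈ N.dnode n) (hdn ▸ hqa)
    · by_cases hqa : q ∈ dom a
      · have hdn : N.dnode n = dom a := (hWF.2.2.2 _ _ _ _ (htr q hqa)).1
        have hcq : C q = n := hen q (hdn ▸ hqa)
        exact absurd (hcq ▸ hp : p ∈ N.dnode n) (hdn ▸ hpa)
      · have ep := hkeep p hpa
        have eq' := hkeep q hqa
        have := ih hrun (by rwa [ep]) (by rwa [eq']) (by rwa [ep])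
        rwa [ep, eq'] at this
  
theorem run_gpath (hWF : N.WellFormed dom) :
    ∀ {v : List A} {C C' : P → N.Node}, N.Run dom C v C' →
      ∀ p, ∃ u, N.GPath (C p) u (C' p) := by
  intro v
  induction v with
  | nil =>
    intro C C' hr p
    cases hr
    exact ⟨[], rfl⟩
  | cons a v ih =>
    intro C C' hr p
    obtain ⟨C₁, ⟨n, hen, htr, hkeep⟩, hrun⟩ := hr
    by_cases hpa : p ∈ dom a
    · have hdn : N.dnode n = dom a := (hWF.2.2.2 _ _ _ _ (htr p hpa)).1
      have hcp : C p = n := hen p (hdn ▸ hpa)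
      obtain ⟨u, hu⟩ := ih hrun p
      exact ⟨(a, p) :: u, ⟨C₁ p, by rw [hcp]; exact htr p hpa, hu⟩⟩
    · obtain ⟨u, hu⟩ := ih hrun p
      exact ⟨u, hkeep p hpa ▸ hu⟩

theorem push_run (hmin : MinimalDFAFor D N.PathsL) (hWF : N.WellFormed dom)
    (hdom : ∀ a, (dom a).Nonempty) (hfin : ∀ a p, N.tr N.nfin a p = none) :
    ∀ {v : List A} {C₀ : P → N.Node} {Cd : P → D.S},
      N.Run dom C₀ v N.Cfin → (∀ p, NRel N D (C₀ p) (Cd p)) →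
      (negOfDFA dom D).Run dom Cd v (negOfDFA dom D).Cfin := by
  intro v
  induction v with
  | nil =>
    intro C₀ Cd hr hrel
    cases hr
    show Cd = _
    funext p
    exact nrel_nfin hmin hfin (hrel p)
  | cons a v ih =>
    intro C₀ Cd hr hrel
    obtain ⟨C₁, ⟨n, hen, htr, hkeep⟩, hrun⟩ := hr
    obtain ⟨p₀, hp₀⟩ := hdom a
    have hdn : N.dnode n = dom a := (hWF.2.2.2 _ _ _ _ (htr p₀ hp₀)).1
    have hC₀ : ∀ p ∈ dom a, C₀ p = n := fun p hp => hen p (hdn ▸ hp)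
    -- all processes in dom a see the same DFA state
    have hCd : ∀ p ∈ dom a, Cd p = Cd p₀ := by
      intro p hp
      have h1 : NRel N D n (Cd p) := hC₀ p hp ▸ hrel p
      have h2 : NRel N D n (Cd p₀) := hC₀ p₀ hp₀ ▸ hrel p₀
      exact nrel_unique hmin h1 h2
    have spec : ∀ p, p ∈ dom a → ∃ s', D.trd (Cd p₀) (a, p) = some s' ∧ NRel N D (C₁ p) s' := by
      intro p hp
      obtain ⟨u, hu⟩ := run_gpath hWF hrun p
      have h1 : NRel N D n (Cd p₀) := hC₀ p₀ hp₀ ▸ hrel p₀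
      exact nrel_backward hmin h1 (show N.tr n a p = some (C₁ p) from htr p hp) hu
    choose f hf1 hf2 using spec
    classical
    refine ⟨fun p => (if h : p ∈ dom a then f p h else Cd p : D.S), ⟨Cd p₀, ?_, ?_, ?_⟩, ?_⟩
    · intro q hq
      rw [dnodeA_eq hmin hWF (hf1 p₀ hp₀)] at hq
      exact hCd q hq
    · intro p hp
      show D.trd (Cd p₀) (a, p) = _
      simp only [dif_pos hp]
      exact hf1 p hp
    · intro p hp
      simp only [dif_neg hp]; rfl
    · apply ih hrun
      intro p
      by_cases hp : p ∈ dom a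
      · simp only [dif_pos hp]; exact hf2 p hp
      · simp only [dif_neg hp]
        rw [hkeep p hp]
        exact hrel p

theorem lift_run (hmin : MinimalDFAFor D N.PathsL) (hWF : N.WellFormed dom)
    (hdom : ∀ a, (dom a).Nonempty) (hfin : ∀ a p, N.tr N.nfin a p = none)
    (hS : N.Sound dom) :
    ∀ {w : List A} {Cd C : P → D.S} {C₀ : P → N.Node} {u : List A},
      N.Run dom N.Cinit u C₀ → (∀ p, NRel N D (C₀ p) (Cd p)) →
      (negOfDFA dom D).Run dom Cd w C →
      ∃ C₁, N.Run dom C₀ w C₁ ∧ ∀ p, NRel N D (C₁ p) (C p) := by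
  intro w
  induction w with
  | nil =>
    intro Cd C C₀ u _ hrel hr
    cases hr
    exact ⟨C₀, rfl, hrel⟩
  | cons a w ih =>
    intro Cd C C₀ u hu hrel hr
    obtain ⟨Cd₁, ⟨sA, henA, htrA, hkeepA⟩, hrun⟩ := hr
    obtain ⟨p₀, hp₀⟩ := hdom a
    have hdnA : (negOfDFA dom D).dnode sA = dom a := dnodeA_eq hmin hWF (htrA p₀ hp₀)
    have hCd : ∀ p ∈ dom a, Cd p = sA := fun p hp => henA p (hdnA ▸ hp)
    have spec : ∀ p, p ∈ dom a → ∃ n', N.tr (C₀ p) a p = some n' ∧ NRel N D n' (Cd₁ p) := by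
      intro p hp
      have h1 : NRel N D (C₀ p) sA := hCd p hp ▸ hrel p
      exact nrel_forward hmin h1 (htrA p hp)
    choose g hg1 hg2 using spec
    obtain ⟨vf, hvf⟩ := hS u C₀ hu
    have hne : ∀ p, p ∈ dom a → C₀ p ≠ N.nfin := by
      intro p hp hcon
      have := hg1 p hp
      rw [hcon, hfin a p] at this
      cases this
    have hdneq : ∀ p, p ∈ dom a → N.dnode (C₀ p) = dom a :=
      fun p hp => (hWF.2.2.2 _ _ _ _ (hg1 p hp)).1
    have heq : ∀ p, p ∈ dom a → ∀ q, q ∈ dom a → C₀ p = C₀ q := by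
      intro p hp q hq
      exact nodes_eq hWF hvf (by rw [hdneq p hp]; exact hq)
        (by rw [hdneq q hq]; exact hp) (hne p hp)
    classical
    have hstep : N.Step dom C₀ a (fun p => if h : p ∈ dom a then g p h else C₀ p) := by
      refine ⟨C₀ p₀, ?_, ?_, ?_⟩
      · intro r hr'
        rw [hdneq p₀ hp₀] at hr'
        exact (heq p₀ hp₀ r hr').symm
      · intro p hp
        simp only [dif_pos hp]
        rw [heq p₀ hp₀ p hp]
        exact hg1 p hp
      · intro p hp
        simp only [dif_neg hp]
    have hu' : N.Run dom N.Cinit (u ++ [a])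
        (fun p => if h : p ∈ dom a then g p h else C₀ p) :=
      run_append hu ⟨_, hstep, rfl⟩
    have hrel' : ∀ p, NRel N D (if h : p ∈ dom a then g p h else C₀ p) (Cd₁ p) := by
      intro p
      by_cases hp : p ∈ dom a
      · simp only [dif_pos hp]; exact hg2 p hp
      · simp only [dif_neg hp]
        rw [hkeepA p hp]
        exact hrel p
    obtain ⟨C₁, hC₁, hrelC₁⟩ := ih hu' hrel' hrun
    exact ⟨C₁, ⟨_, hstep, hC₁⟩, hrelC₁⟩

end WithMin

end NASoundAux

/-- The negotiation `N_A` built from the minimal DFA of `Paths(N)` is sound. -/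
theorem negOfDFA_sound [Finite P] [Finite A] (dom : A → Set P)
    (hdom : ∀ a, (dom a).Nonempty) (N : Negotiation P A) [Finite N.Node]
    (hWF : N.WellFormed dom)
    (hfin : ∀ a p, N.tr N.nfin a p = none)
    (hS : N.Sound dom)
    (D : PDFA (A × P)) (hmin : MinimalDFAFor D N.PathsL) :
    (negOfDFA dom D).Sound dom := by
  intro word C hrun
  have hrelinit : ∀ p : P, NRel N D ((N.Cinit) p) ((negOfDFA dom D).Cinit p) :=
    fun _ => nrel_init hmin
  obtain ⟨C₁, hC₁, hrelC₁⟩ := lift_run hmin hWF hdom hfin hS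
    (u := []) (C₀ := N.Cinit) rfl hrelinit hrun
  obtain ⟨v, hv⟩ := hS word C₁ hC₁
  exact ⟨v, push_run hmin hWF hdom hfin hv hrelC₁⟩
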